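/- Every polyhedral real Banach space contains no isometric copy of c; that is, if X is polyhedral then there is no linear isometric embedding of c into X. -/

import Mathlib

open Filter Topology Metric
open scoped ENNReal

noncomputable section

/-- The space `ℓ₁` of absolutely summable real sequences. -/
abbrev EllOne : Type := lp (fun _ : ℕ => ℝ) 1

/-- The subspace of `ℓ∞` consisting of convergent real sequences. -/
def convSeq : Subspace ℝ (lp (fun _ : ℕ => ℝ) ∞) where
  carrier := {f | ∃ l : ℝ, Tendsto (fun n => f n) atTop (𝓝 l)}
  add_mem' := by
    rintro f g ⟨a, ha⟩ ⟨b, hb⟩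
    exact ⟨a + b, by simpa [lp.coeFn_add] using ha.add hb⟩
  zero_mem' := ⟨0, by simp [lp.coeFn_zero]⟩
  smul_mem' := by
    rintro c f ⟨a, ha⟩
    exact ⟨c * a, by simpa [lp.coeFn_smul] using ha.const_mul c⟩

/-- The Banach space `c` of convergent real sequences with the sup norm,
realized as a subspace of `ℓ∞`. -/
abbrev SpaceC : Type := ↥convSeq

/-- A normed space is polyhedral if the unit ball of each of its
finite-dimensional subspaces is a polytope (the convex hull of finitely many points). -/
def IsPolyhedralSpace (X : Type*) [NormedAddCommGroup X] [NormedSpace ℝ X] : Prop :=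
  ∀ Y : Subspace ℝ X, FiniteDimensional ℝ Y →
    ∃ F : Set Y, F.Finite ∧ closedBall (0 : Y) 1 = convexHull ℝ F

/-- The set of extreme points of the closed unit ball of the dual of `X`. -/
def extBdual (X : Type*) [NormedAddCommGroup X] [NormedSpace ℝ X] :
    Set (StrongDual ℝ X) :=
  Set.extremePoints ℝ (closedBall (0 : StrongDual ℝ X) 1)

/-- `D(x) = {x* ∈ S_{X*} : x*(x) = 1}`. -/
def Dface {X : Type*} [NormedAddCommGroup X] [NormedSpace ℝ X] (x : X) :
    Set (StrongDual ℝ X) :=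
  {f | ‖f‖ = 1 ∧ f x = 1}

/-! ### Auxiliary material for the proof -/

/-- Three distinct points of the unit circle cannot lie on a common line
`{(x, y) | a x + b y = 1}`. -/
private lemma three_circle_points {a b c₁ c₂ c₃ s₁ s₂ s₃ : ℝ}
    (e₁ : a * c₁ + b * s₁ = 1) (e₂ : a * c₂ + b * s₂ = 1) (e₃ : a * c₃ + b * s₃ = 1)
    (p₁ : c₁ ^ 2 + s₁ ^ 2 = 1) (p₂ : c₂ ^ 2 + s₂ ^ 2 = 1) (p₃ : c₃ ^ 2 + s₃ ^ 2 = 1)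
    (h12 : c₁ ≠ c₂) (h23 : c₂ ≠ c₃) (h13 : c₁ ≠ c₃) : False := by
  have q : ∀ c s : ℝ, a * c + b * s = 1 → c ^ 2 + s ^ 2 = 1 →
      (a ^ 2 + b ^ 2) * c ^ 2 - 2 * a * c + (1 - b ^ 2) = 0 := by
    intro c s e p
    have hbs : b * s = 1 - a * c := by linarith
    have hsq : b ^ 2 * s ^ 2 = (1 - a * c) ^ 2 := by
      rw [← hbs]; ring
    nlinarith [p, hsq]
  have Q₁ := q c₁ s₁ e₁ p₁
  have Q₂ := q c₂ s₂ e₂ p₂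
  have Q₃ := q c₃ s₃ e₃ p₃
  have d12 : (a ^ 2 + b ^ 2) * (c₁ + c₂) - 2 * a = 0 := by
    have h : (c₁ - c₂) * ((a ^ 2 + b ^ 2) * (c₁ + c₂) - 2 * a) = 0 := by linear_combination Q₁ - Q₂
    rcases mul_eq_zero.mp h with h' | h'
    · exact absurd (sub_eq_zero.mp h') h12
    · exact h'
  have d23 : (a ^ 2 + b ^ 2) * (c₂ + c₃) - 2 * a = 0 := by
    have h : (c₂ - c₃) * ((a ^ 2 + b ^ 2) * (c₂ + c₃) - 2 * a) = 0 := by linear_combination Q₂ - Q₃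
    rcases mul_eq_zero.mp h with h' | h'
    · exact absurd (sub_eq_zero.mp h') h23
    · exact h'
  have dA : (a ^ 2 + b ^ 2) * (c₁ - c₃) = 0 := by linear_combination d12 - d23
  rcases mul_eq_zero.mp dA with hA | hA
  · have ha : a = 0 := by nlinarith
    have hb : b = 0 := by nlinarith
    rw [ha, hb] at e₁; norm_num at e₁
  · exact absurd (sub_eq_zero.mp hA) h13

private def θn (n : ℕ) : ℝ := 1 / (n + 1)

private lemma cast_pos (n : ℕ) : (0:ℝ) < (n:ℝ) + 1 := Nat.cast_add_one_pos n

private lemma θn_pos (n : ℕ) : 0 < θn n := by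
  rw [θn]; exact div_pos one_pos (cast_pos n)

private lemma θn_le_one (n : ℕ) : θn n ≤ 1 := by
  rw [θn, div_le_one (cast_pos n)]
  linarith [Nat.cast_nonneg (α := ℝ) n]

private lemma θn_inj : Function.Injective θn := by
  intro m n h
  rw [θn, θn, div_eq_div_iff (cast_pos m).ne' (cast_pos n).ne'] at h
  have : (m : ℝ) = n := by linarith
  exact_mod_cast this

private lemma cos_θn_inj {m n : ℕ} (h : Real.cos (θn m) = Real.cos (θn n)) : m = n := by
  apply θn_inj
  exact Real.injOn_cos ⟨(θn_pos m).le, (θn_le_one m).trans (by linarith [Real.pi_gt_three])⟩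
    ⟨(θn_pos n).le, (θn_le_one n).trans (by linarith [Real.pi_gt_three])⟩ h

private def cosLp : lp (fun _ : ℕ => ℝ) ∞ :=
  ⟨fun n => Real.cos (θn n), memℓp_infty ⟨1, by
    rintro x ⟨n, rfl⟩
    simpa [Real.norm_eq_abs] using Real.abs_cos_le_one (θn n)⟩⟩

private def sinLp : lp (fun _ : ℕ => ℝ) ∞ :=
  ⟨fun n => Real.sin (θn n), memℓp_infty ⟨1, by
    rintro x ⟨n, rfl⟩
    simpa [Real.norm_eq_abs] using Real.abs_sin_le_one (θn n)⟩⟩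

private lemma cosLp_apply (n : ℕ) : cosLp n = Real.cos (θn n) := rfl
private lemma sinLp_apply (n : ℕ) : sinLp n = Real.sin (θn n) := rfl

private lemma θn_tendsto : Tendsto θn atTop (𝓝 0) :=
  tendsto_one_div_add_atTop_nhds_zero_nat

private def fC : SpaceC :=
  ⟨cosLp, 1, by
    simpa [cosLp_apply, Function.comp_def] using (Real.continuous_cos.continuousAt (x := 0)).tendsto.comp θn_tendsto⟩

private def gC : SpaceC :=
  ⟨sinLp, 0, by
    simpa [sinLp_apply, Function.comp_def] using (Real.continuous_sin.continuousAt (x := 0)).tendsto.comp θn_tendsto⟩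

private def evalC (m : ℕ) : SpaceC →ₗ[ℝ] ℝ where
  toFun h := h.1 m
  map_add' _ _ := rfl
  map_smul' _ _ := rfl

private lemma abs_evalC_le (m : ℕ) (h : SpaceC) : |evalC m h| ≤ ‖h‖ := by
  calc |evalC m h| = ‖h.1 m‖ := (Real.norm_eq_abs _).symm
    _ ≤ ‖h.1‖ := lp.norm_apply_le_norm ENNReal.top_ne_zero h.1 m
    _ = ‖h‖ := rfl

private lemma evalC_comb (a b : ℝ) (m : ℕ) :
    evalC m (a • fC + b • gC) = a * Real.cos (θn m) + b * Real.sin (θn m) := by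
  show ((a • fC + b • gC : SpaceC).1 : ∀ _ : ℕ, ℝ) m = _
  have : ((a • fC + b • gC : SpaceC).1 : lp (fun _ : ℕ => ℝ) ∞)
      = a • cosLp + b • sinLp := rfl
  rw [this, lp.coeFn_add, lp.coeFn_smul, lp.coeFn_smul]
  simp [cosLp_apply, sinLp_apply]

private lemma norm_comb_le (a b : ℝ) (h : ∀ n, |a * Real.cos (θn n) + b * Real.sin (θn n)| ≤ 1) :
    ‖a • fC + b • gC‖ ≤ 1 := by
  rw [Submodule.coe_norm]
  apply lp.norm_le_of_forall_le zero_le_one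
  intro n
  have hc : ((a • fC + b • gC : SpaceC).1 : lp (fun _ : ℕ => ℝ) ∞) n
      = a * Real.cos (θn n) + b * Real.sin (θn n) := by
    have : ((a • fC + b • gC : SpaceC).1 : lp (fun _ : ℕ => ℝ) ∞)
        = a • cosLp + b • sinLp := rfl
    rw [this, lp.coeFn_add, lp.coeFn_smul, lp.coeFn_smul]
    simp [cosLp_apply, sinLp_apply]
  rw [hc]
  simpa [Real.norm_eq_abs] using h n

set_option maxHeartbeats 2000000 in
/-- A polyhedral real Banach space contains no isometric copy of `c`. -/
theorem no_isometric_c_of_polyhedral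
    {X : Type} [NormedAddCommGroup X] [NormedSpace ℝ X] [CompleteSpace X]
    (hpoly : IsPolyhedralSpace X) :
    ¬ Nonempty (SpaceC →ₗᵢ[ℝ] X) := by
  rintro ⟨T⟩
  set Y : Subspace ℝ X := Submodule.span ℝ {T fC, T gC} with hYdef
  have hfin : FiniteDimensional ℝ Y :=
    FiniteDimensional.span_of_finite ℝ ((Set.finite_singleton _).insert _)
  obtain ⟨F, hFfin, hball⟩ := hpoly Y hfin
  -- choose coordinates for each element of `Y`
  have hcoord : ∀ z : Y, ∃ a b : ℝ, (z : X) = a • T fC + b • T gC := by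
    intro z
    obtain ⟨a, b, hab⟩ := Submodule.mem_span_pair.mp z.2
    exact ⟨a, b, hab.symm⟩
  choose A B hAB using hcoord
  set hz : Y → SpaceC := fun z => A z • fC + B z • gC with hhz
  have hTz : ∀ z : Y, T (hz z) = (z : X) := by
    intro z
    rw [hhz]
    simp only [map_add, map_smul]
    exact (hAB z).symm
  set s : Finset Y := hFfin.toFinset with hsdef
  -- the elements of `F` are in the unit ball
  have hFle : ∀ z ∈ s, ‖z‖ ≤ 1 := by
    intro z hzs
    have hzF : z ∈ F := hFfin.mem_toFinset.mp hzs
    have : z ∈ closedBall (0 : Y) 1 := by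
      rw [hball]; exact subset_convexHull ℝ F hzF
    simpa [mem_closedBall_zero_iff] using this
  -- main step: for every `m` some vertex satisfies the tangency equation at `θn m`
  have key : ∀ m : ℕ, ∃ z ∈ s, A z * Real.cos (θn m) + B z * Real.sin (θn m) = 1 := by
    intro m
    set xm : SpaceC := Real.cos (θn m) • fC + Real.sin (θn m) • gC with hxm
    have hxm_norm : ‖xm‖ ≤ 1 := by
      apply norm_comb_le
      intro n
      have hcs : Real.cos (θn m) * Real.cos (θn n) + Real.sin (θn m) * Real.sin (θn n)
          = Real.cos (θn m - θn n) := (Real.cos_sub _ _).symm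
      rw [hcs]
      exact Real.abs_cos_le_one _
    have hymem : Real.cos (θn m) • T fC + Real.sin (θn m) • T gC ∈ Y :=
      Submodule.mem_span_pair.mpr ⟨_, _, rfl⟩
    set ym : Y := ⟨Real.cos (θn m) • T fC + Real.sin (θn m) • T gC, hymem⟩ with hymdef
    have hym : (ym : X) = T xm := by
      rw [hxm]
      simp only [map_add, map_smul]
      rfl
    have hball_mem : ym ∈ closedBall (0 : Y) 1 := by
      rw [mem_closedBall_zero_iff]
      have : ‖ym‖ = ‖xm‖ := by
        rw [Submodule.coe_norm, hym, T.norm_map]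
      rw [this]; exact hxm_norm
    rw [hball, ← hFfin.coe_toFinset, Finset.convexHull_eq] at hball_mem
    obtain ⟨w, hw0, hw1, hwc⟩ := hball_mem
    rw [Finset.centerMass_eq_of_sum_1 _ _ hw1] at hwc
    -- transfer the convex combination to `SpaceC`
    have hXsum : (∑ z ∈ s, w z • (z : X)) = (ym : X) := by
      have := congrArg (Y.subtype) hwc
      simpa using this
    have hTsum : T (∑ z ∈ s, w z • hz z) = T xm := by
      rw [map_sum]
      simp_rw [map_smul, hTz]
      rw [hXsum, hym]
    have hCsum : (∑ z ∈ s, w z • hz z) = xm := T.injective hTsum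
    -- evaluate the m-th coordinate
    have hEval := congrArg (evalC m) hCsum
    rw [map_sum] at hEval
    have hxm_eval : evalC m xm = 1 := by
      rw [hxm, evalC_comb]
      linear_combination Real.sin_sq_add_cos_sq (θn m)
    have hterm : ∀ z : Y, evalC m (hz z) = A z * Real.cos (θn m) + B z * Real.sin (θn m) := by
      intro z
      rw [hhz]
      exact evalC_comb _ _ _
    have hterm_le : ∀ z ∈ s, A z * Real.cos (θn m) + B z * Real.sin (θn m) ≤ 1 := by
      intro z hzs
      have h1 : |evalC m (hz z)| ≤ ‖hz z‖ := abs_evalC_le m (hz z)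
      have h2 : ‖hz z‖ = ‖z‖ := by
        rw [← T.norm_map, hTz, Submodule.norm_coe]
      rw [hterm z] at h1
      calc A z * Real.cos (θn m) + B z * Real.sin (θn m)
          ≤ |A z * Real.cos (θn m) + B z * Real.sin (θn m)| := le_abs_self _
        _ ≤ ‖z‖ := h2 ▸ h1
        _ ≤ 1 := hFle z hzs
    -- the convex combination of values `≤ 1` equals `1`, so some positive-weight term is `1`
    have hsum1 : ∑ z ∈ s, w z * (A z * Real.cos (θn m) + B z * Real.sin (θn m)) = 1 := by
      rw [← hxm_eval, ← hEval]
      refine Finset.sum_congr rfl fun z hzs => ?_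
      rw [map_smul, hterm z, smul_eq_mul]
    have hzero : ∑ z ∈ s, w z * (1 - (A z * Real.cos (θn m) + B z * Real.sin (θn m))) = 0 := by
      simp only [mul_sub, mul_one]
      rw [Finset.sum_sub_distrib, hw1, hsum1, sub_self]
    have hnn : ∀ z ∈ s, 0 ≤ w z * (1 - (A z * Real.cos (θn m) + B z * Real.sin (θn m))) :=
      fun z hzs => mul_nonneg (hw0 z hzs) (by linarith [hterm_le z hzs])
    obtain ⟨z, hzs, hzw⟩ := Finset.exists_ne_zero_of_sum_ne_zero (hw1.trans_ne one_ne_zero)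
    have hz0 : w z * (1 - (A z * Real.cos (θn m) + B z * Real.sin (θn m))) = 0 :=
      (Finset.sum_eq_zero_iff_of_nonneg hnn).mp hzero z hzs
    rcases mul_eq_zero.mp hz0 with h | h
    · exact absurd h hzw
    · exact ⟨z, hzs, by linarith⟩
  -- pigeonhole: one vertex works for three distinct `m`
  choose zf hzfs hzf using key
  have : ∃ z0 : {z // z ∈ s}, (Set.range fun m : ℕ => (⟨zf m, hzfs m⟩ : {z // z ∈ s})).Finite ∧
      True := ⟨⟨zf 0, hzfs 0⟩, Set.toFinite _, trivial⟩
  obtain ⟨z0, hfib⟩ := Finite.exists_infinite_fiber (fun m : ℕ => (⟨zf m, hzfs m⟩ : {z // z ∈ s}))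
  rw [Set.infinite_coe_iff] at hfib
  obtain ⟨m₁, hm₁, -⟩ := hfib.exists_gt 0
  obtain ⟨m₂, hm₂, h12⟩ := hfib.exists_gt m₁
  obtain ⟨m₃, hm₃, h23⟩ := hfib.exists_gt m₂
  have hz1 : zf m₁ = (z0 : Y) := congrArg Subtype.val hm₁
  have hz2 : zf m₂ = (z0 : Y) := congrArg Subtype.val hm₂
  have hz3 : zf m₃ = (z0 : Y) := congrArg Subtype.val hm₃
  have e₁ := hzf m₁; rw [hz1] at e₁
  have e₂ := hzf m₂; rw [hz2] at e₂
  have e₃ := hzf m₃; rw [hz3] at e₃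
  have hcos : ∀ {p q : ℕ}, p ≠ q → Real.cos (θn p) ≠ Real.cos (θn q) :=
    fun hpq h => hpq (cos_θn_inj h)
  exact three_circle_points e₁ e₂ e₃
    (Real.cos_sq_add_sin_sq _) (Real.cos_sq_add_sin_sq _) (Real.cos_sq_add_sin_sq _)
    (hcos h12.ne) (hcos h23.ne) (hcos (h12.trans h23).ne)

end
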